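/- Let n ≥ 1 and set y_i = 16^i for 1 ≤ i ≤ n. Let B be the real symmetric n × n matrix with entries B_{ij} = y_i y_j / (y_i + y_j)². Then for every vector x ∈ ℝⁿ, (7/60)·‖x‖² ≤ ⟨Bx, x⟩ ≤ (23/60)·‖x‖²; equivalently, every eigenvalue λ of B satisfies 7/60 ≤ λ ≤ 23/60. -/

import Mathlib

open Matrix Finset

/-- Geometric tail bound. -/
lemma geom_tail' (m : ℕ) :
    ∑ k ∈ Finset.Icc 1 m, ((1:ℝ)/16) ^ k ≤ 1/15 - (1/15) * (1/16) ^ m := by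
  induction m with
  | zero => simp
  | succ m ih =>
    rw [Finset.sum_Icc_succ_top (by omega : 1 ≤ m + 1)]
    have hp : (0:ℝ) ≤ (1/16) ^ m := by positivity
    rw [pow_succ]
    nlinarith [ih]

/-- Geometric tail bound. -/
lemma geom_tail (m : ℕ) : ∑ k ∈ Finset.Icc 1 m, ((1:ℝ)/16) ^ k ≤ 1/15 := by
  have := geom_tail' m
  have hp : (0:ℝ) ≤ (1/16) ^ m := by positivity
  nlinarith

/-- Off-diagonal entry bound. -/
lemma entry_bound (a b : ℕ) (hab : a < b) :
    (16:ℝ) ^ a * 16 ^ b / ((16:ℝ) ^ a + 16 ^ b) ^ 2 ≤ ((1:ℝ)/16) ^ (b - a) := by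
  have hpa : (0:ℝ) < 16 ^ a := by positivity
  have hpb : (0:ℝ) < 16 ^ b := by positivity
  have h1 : ((16:ℝ) ^ b) ^ 2 ≤ ((16:ℝ) ^ a + 16 ^ b) ^ 2 := by nlinarith
  have h3 : (16:ℝ) ^ a * 16 ^ b / ((16:ℝ) ^ a + 16 ^ b) ^ 2 ≤
      (16:ℝ) ^ a * 16 ^ b / ((16:ℝ) ^ b) ^ 2 :=
    div_le_div_of_nonneg_left (by positivity) (by positivity) h1
  refine h3.trans (le_of_eq ?_)
  have hb : (16:ℝ) ^ b = 16 ^ a * 16 ^ (b - a) := by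
    rw [← pow_add]; congr 1; omega
  have hpd : (0:ℝ) < 16 ^ (b - a) := by positivity
  rw [hb, div_pow, one_pow]
  field_simp

/-- Row sum bound for the distance-based majorant. -/
lemma rowsum (n : ℕ) (i : Fin n) :
    ∑ j ∈ Finset.univ.erase i, ((1:ℝ)/16) ^ (Nat.dist i.val j.val) ≤ 2/15 := by
  classical
  have hsplit : (Finset.univ.erase i) =
      (Finset.univ.filter (fun j : Fin n => (j:ℕ) < (i:ℕ))) ∪
      (Finset.univ.filter (fun j : Fin n => (i:ℕ) < (j:ℕ))) := by
    ext j
    simp only [Finset.mem_erase, Finset.mem_union, Finset.mem_filter, Finset.mem_univ,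
      true_and, and_true, ne_eq, Fin.ext_iff]
    omega
  have hdisj : Disjoint (Finset.univ.filter (fun j : Fin n => (j:ℕ) < (i:ℕ)))
      (Finset.univ.filter (fun j : Fin n => (i:ℕ) < (j:ℕ))) := by
    rw [Finset.disjoint_left]
    intro j hj hj'
    simp at hj hj'
    omega
  rw [hsplit, Finset.sum_union hdisj]
  have h1 : ∑ j ∈ Finset.univ.filter (fun j : Fin n => (j:ℕ) < (i:ℕ)),
      ((1:ℝ)/16) ^ (Nat.dist i.val j.val) ≤ 1/15 := by
    rw [show ∑ j ∈ Finset.univ.filter (fun j : Fin n => (j:ℕ) < (i:ℕ)),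
        ((1:ℝ)/16) ^ (Nat.dist i.val j.val)
      = ∑ k ∈ (Finset.univ.filter (fun j : Fin n => (j:ℕ) < (i:ℕ))).image
          (fun j : Fin n => (i:ℕ) - (j:ℕ)), ((1:ℝ)/16) ^ k from ?_]
    · refine le_trans (Finset.sum_le_sum_of_subset_of_nonneg ?_ ?_) (geom_tail n)
      · intro k hk
        simp only [Finset.mem_image, Finset.mem_filter] at hk
        obtain ⟨j, ⟨_, hj⟩, rfl⟩ := hk
        simp only [Finset.mem_Icc]
        omega
      · intro k _ _; positivity
    · rw [Finset.sum_image]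
      · refine Finset.sum_congr rfl fun j hj => ?_
        simp only [Finset.mem_filter] at hj
        congr 1
        rw [Nat.dist_eq_sub_of_le_right (le_of_lt hj.2)]
      · intro a ha b hb hab
        simp only [Finset.mem_coe, Finset.mem_filter] at ha hb
        beta_reduce at hab
        have : (a:ℕ) = (b:ℕ) := by omega
        exact Fin.ext this
  have h2 : ∑ j ∈ Finset.univ.filter (fun j : Fin n => (i:ℕ) < (j:ℕ)),
      ((1:ℝ)/16) ^ (Nat.dist i.val j.val) ≤ 1/15 := by
    rw [show ∑ j ∈ Finset.univ.filter (fun j : Fin n => (i:ℕ) < (j:ℕ)),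
        ((1:ℝ)/16) ^ (Nat.dist i.val j.val)
      = ∑ k ∈ (Finset.univ.filter (fun j : Fin n => (i:ℕ) < (j:ℕ))).image
          (fun j : Fin n => (j:ℕ) - (i:ℕ)), ((1:ℝ)/16) ^ k from ?_]
    · refine le_trans (Finset.sum_le_sum_of_subset_of_nonneg ?_ ?_) (geom_tail n)
      · intro k hk
        simp only [Finset.mem_image, Finset.mem_filter] at hk
        obtain ⟨j, ⟨_, hj⟩, rfl⟩ := hk
        simp only [Finset.mem_Icc]
        have := j.isLt
        omega
      · intro k _ _; positivity
    · rw [Finset.sum_image]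
      · refine Finset.sum_congr rfl fun j hj => ?_
        simp only [Finset.mem_filter] at hj
        congr 1
        rw [Nat.dist_eq_sub_of_le (le_of_lt hj.2)]
      · intro a ha b hb hab
        simp only [Finset.mem_coe, Finset.mem_filter] at ha hb
        beta_reduce at hab
        have : (a:ℕ) = (b:ℕ) := by omega
        exact Fin.ext this
  linarith

/-- Let `y_i = 16^i` for `1 ≤ i ≤ n` and `B` the `n × n` matrix with entries
`B_{ij} = y_i y_j/(y_i + y_j)²`. Then `(7/60)‖x‖² ≤ ⟨Bx, x⟩ ≤ (23/60)‖x‖²` for all `x ∈ ℝⁿ`. -/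
theorem stmt9 (n : ℕ) (hn : 1 ≤ n)
    (y : Fin n → ℝ) (hy : ∀ i : Fin n, y i = 16 ^ ((i : ℕ) + 1))
    (B : Matrix (Fin n) (Fin n) ℝ)
    (hB : ∀ i j : Fin n, B i j = y i * y j / (y i + y j) ^ 2)
    (x : Fin n → ℝ) :
    7 / 60 * (x ⬝ᵥ x) ≤ B.mulVec x ⬝ᵥ x ∧ B.mulVec x ⬝ᵥ x ≤ 23 / 60 * (x ⬝ᵥ x) := by
  classical
  have hy0 : ∀ i, (0:ℝ) < y i := fun i => by rw [hy]; positivity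
  have hBii : ∀ i, B i i = 1/4 := by
    intro i
    rw [hB]
    have h := hy0 i
    rw [div_eq_div_iff (by positivity) (by norm_num)]
    ring
  have hBsymm : ∀ i j, B i j = B j i := fun i j => by rw [hB, hB]; ring_nf
  have hBpos : ∀ i j, (0:ℝ) ≤ B i j := fun i j => by
    rw [hB]
    have := hy0 i; have := hy0 j
    positivity
  -- off-diagonal entry bound
  have hOff : ∀ i j : Fin n, i ≠ j → B i j ≤ ((1:ℝ)/16) ^ (Nat.dist i.val j.val) := by
    intro i j hij
    rw [hB, hy, hy]
    rcases Nat.lt_or_ge (i:ℕ) (j:ℕ) with h | h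
    · have := entry_bound ((i:ℕ)+1) ((j:ℕ)+1) (by omega)
      rw [Nat.dist_eq_sub_of_le (le_of_lt h)]
      have hd : (j:ℕ) + 1 - ((i:ℕ)+1) = (j:ℕ) - (i:ℕ) := by omega
      rwa [hd] at this
    · have hlt : (j:ℕ) < (i:ℕ) := by
        rcases Nat.lt_or_ge (j:ℕ) (i:ℕ) with h' | h'
        · exact h'
        · exact absurd (Fin.ext (by omega : (i:ℕ) = (j:ℕ))) hij
      have := entry_bound ((j:ℕ)+1) ((i:ℕ)+1) (by omega)
      rw [Nat.dist_eq_sub_of_le_right (le_of_lt hlt)]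
      have hd : (i:ℕ) + 1 - ((j:ℕ)+1) = (i:ℕ) - (j:ℕ) := by omega
      rw [hd] at this
      calc (16:ℝ)^((i:ℕ)+1) * 16^((j:ℕ)+1) / (16^((i:ℕ)+1) + 16^((j:ℕ)+1))^2
          = (16:ℝ)^((j:ℕ)+1) * 16^((i:ℕ)+1) / (16^((j:ℕ)+1) + 16^((i:ℕ)+1))^2 := by ring_nf
        _ ≤ _ := this
  -- row sums
  have hRow : ∀ i : Fin n, ∑ j ∈ Finset.univ.erase i, B i j ≤ 2/15 := by
    intro i
    refine le_trans (Finset.sum_le_sum fun j hj => hOff i j ?_) (rowsum n i)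
    exact fun h => (Finset.mem_erase.mp hj).1 h.symm
  -- rewrite quadratic form
  have hQ : B.mulVec x ⬝ᵥ x = ∑ i, ∑ j, B i j * x j * x i := by
    simp [mulVec, dotProduct, Finset.sum_mul, mul_assoc]
  have hsplit : ∀ i : Fin n, ∑ j, B i j * x j * x i
      = 1/4 * (x i * x i) + ∑ j ∈ Finset.univ.erase i, B i j * x j * x i := by
    intro i
    rw [← Finset.sum_erase_add _ _ (Finset.mem_univ i), hBii]
    ring
  have hQsplit : B.mulVec x ⬝ᵥ x
      = 1/4 * (x ⬝ᵥ x) + ∑ i, ∑ j ∈ Finset.univ.erase i, B i j * x j * x i := by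
    rw [hQ]
    simp only [hsplit]
    rw [Finset.sum_add_distrib, ← Finset.mul_sum]
    simp [dotProduct]
  set E : ℝ := ∑ i, ∑ j ∈ Finset.univ.erase i, B i j * x j * x i with hE
  -- bound |E|
  have hEbound : |E| ≤ 2/15 * (x ⬝ᵥ x) := by
    have step1 : |E| ≤ ∑ i, ∑ j ∈ Finset.univ.erase i, B i j * ((x i)^2 + (x j)^2) / 2 := by
      refine le_trans (Finset.abs_sum_le_sum_abs _ _) (Finset.sum_le_sum fun i _ => ?_)
      refine le_trans (Finset.abs_sum_le_sum_abs _ _) (Finset.sum_le_sum fun j _ => ?_)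
      rw [abs_mul, abs_mul, abs_of_nonneg (hBpos i j)]
      have h1 : |x j| * |x i| ≤ ((x i)^2 + (x j)^2) / 2 := by
        nlinarith [sq_nonneg (|x i| - |x j|), sq_abs (x i), sq_abs (x j)]
      have := mul_le_mul_of_nonneg_left h1 (hBpos i j)
      nlinarith [hBpos i j]
    have step2 : ∑ i, ∑ j ∈ Finset.univ.erase i, B i j * ((x i)^2 + (x j)^2) / 2
        = ∑ i, (x i)^2 * ∑ j ∈ Finset.univ.erase i, B i j := by
      have hsw : ∑ i, ∑ j ∈ Finset.univ.erase i, B i j * (x j)^2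
          = ∑ j, ∑ i ∈ Finset.univ.erase j, B i j * (x j)^2 := by
        refine Finset.sum_comm' ?_
        intro a b
        simp [Finset.mem_erase, eq_comm]
      have : ∀ j : Fin n, ∑ i ∈ Finset.univ.erase j, B i j * (x j)^2
          = (x j)^2 * ∑ i ∈ Finset.univ.erase j, B j i := by
        intro j
        rw [Finset.mul_sum]
        exact Finset.sum_congr rfl fun i _ => by rw [hBsymm i j]; ring
      calc ∑ i, ∑ j ∈ Finset.univ.erase i, B i j * ((x i)^2 + (x j)^2) / 2
          = (∑ i, ∑ j ∈ Finset.univ.erase i, B i j * (x i)^2) / 2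
            + (∑ i, ∑ j ∈ Finset.univ.erase i, B i j * (x j)^2) / 2 := by
            rw [Finset.sum_div, Finset.sum_div, ← Finset.sum_add_distrib]
            refine Finset.sum_congr rfl fun i _ => ?_
            rw [Finset.sum_div, Finset.sum_div, ← Finset.sum_add_distrib]
            exact Finset.sum_congr rfl fun j _ => by ring
        _ = (∑ i, (x i)^2 * ∑ j ∈ Finset.univ.erase i, B i j) / 2
            + (∑ j, (x j)^2 * ∑ i ∈ Finset.univ.erase j, B j i) / 2 := by
            rw [hsw]
            congr 1
            · congr 1
              refine Finset.sum_congr rfl fun i _ => ?_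
              rw [Finset.mul_sum]
              exact Finset.sum_congr rfl fun j _ => by ring
            · congr 1
              exact Finset.sum_congr rfl fun j _ => this j
        _ = ∑ i, (x i)^2 * ∑ j ∈ Finset.univ.erase i, B i j := by ring
    have step3 : ∑ i, (x i)^2 * ∑ j ∈ Finset.univ.erase i, B i j ≤ 2/15 * (x ⬝ᵥ x) := by
      have : ∑ i, (x i)^2 * ∑ j ∈ Finset.univ.erase i, B i j ≤ ∑ i, (x i)^2 * (2/15) :=
        Finset.sum_le_sum fun i _ => mul_le_mul_of_nonneg_left (hRow i) (sq_nonneg _)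
      refine le_trans this (le_of_eq ?_)
      rw [← Finset.sum_mul]
      simp [dotProduct, sq, mul_comm]
    calc |E| ≤ _ := step1
      _ = _ := step2
      _ ≤ _ := step3
  have habs := abs_le.mp hEbound
  constructor
  · rw [hQsplit]; linarith
  · rw [hQsplit]; linarith
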